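/- Let k ≥ 1 be an integer, λ₁, λ₂ > 0 and H₁, H₂ > 1/2 with H₁ ≠ 1 and H₂ ≠ 1. Then there exists a constant C > 0 (depending only on k, H₁, H₂, λ₁, λ₂) such that for all s, t > 0, ∫_{(ℝ²)^k} h_{s,t}((x₁,y₁),…,(x_k,y_k))² dx₁dy₁…dx_k dy_k ≤ C · t^{min(2H₁,2)} · s^{min(2H₂,2)}. -/

import Mathlib

open MeasureTheory

/-- The tempered power kernel: `x ^ p * exp (-(lam * x))` for `x > 0`, and `0` otherwise
(so `x₊ ^ p` is interpreted as `0` when `x ≤ 0`). -/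
noncomputable def tk (p lam x : ℝ) : ℝ := if 0 < x then x ^ p * Real.exp (-(lam * x)) else 0

/-- The kernel of the two-parameter tempered Hermite field of order `k`:
the first time argument (paired with the `x`-variables, `H₁`, `λ₁`) is written first. -/
noncomputable def hkernel (k : ℕ) (H1 H2 l1 l2 t s : ℝ) (x y : Fin k → ℝ) : ℝ :=
  ∫ a in Set.Ioc (0:ℝ) t, ∫ b in Set.Ioc (0:ℝ) s,
    ∏ j, tk (-(1/2 + (1 - H1)/(k:ℝ))) l1 (a - x j) * tk (-(1/2 + (1 - H2)/(k:ℝ))) l2 (b - y j)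

open Set
open scoped ENNReal

section Auxiliary

lemma tk_nonneg (p l x : ℝ) : 0 ≤ tk p l x := by
  unfold tk; split
  · exact mul_nonneg (Real.rpow_nonneg (le_of_lt ‹_›) _) (Real.exp_nonneg _)
  · exact le_refl _

lemma tk_meas (p l : ℝ) : Measurable (tk p l) := by
  unfold tk
  exact Measurable.ite measurableSet_Ioi
    ((measurable_id.pow_const p).mul ((measurable_const.mul measurable_id).neg.exp))
    measurable_const

lemma lint_Ioc_rpow {r : ℝ} (hr : -1 < r) {c : ℝ} (hc : 0 ≤ c) :
    ∫⁻ u in Set.Ioc (0:ℝ) c, ENNReal.ofReal (u ^ r) = ENNReal.ofReal (c ^ (r+1) / (r+1)) := by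
  have hint : IntegrableOn (fun u : ℝ => u ^ r) (Set.Ioc 0 c) := by
    have h := intervalIntegral.intervalIntegrable_rpow' (a := 0) (b := c) hr
    rwa [intervalIntegrable_iff, Set.uIoc_of_le hc] at h
  rw [← ofReal_integral_eq_lintegral_ofReal hint ?_]
  · congr 1
    rw [← intervalIntegral.integral_of_le hc, integral_rpow (Or.inl hr)]
    rw [Real.zero_rpow (by linarith : r + 1 ≠ 0)]
    ring
  · filter_upwards [ae_restrict_mem measurableSet_Ioc] with u hu
    exact Real.rpow_nonneg hu.1.le _

lemma lint_Ioi_rpow {r : ℝ} (hr : r < -1) {c : ℝ} (hc : 0 < c) :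
    ∫⁻ u in Set.Ioi c, ENNReal.ofReal (u ^ r) = ENNReal.ofReal (-c ^ (r+1) / (r+1)) := by
  rw [← ofReal_integral_eq_lintegral_ofReal (integrableOn_Ioi_rpow_of_lt hr hc) ?_]
  · rw [integral_Ioi_rpow_of_lt hr hc]
  · filter_upwards [ae_restrict_mem measurableSet_Ioi] with u hu
    exact Real.rpow_nonneg (hc.le.trans hu.le) _

theorem my_lintegral_fin_prod {n : ℕ} (f : Fin n → ℝ → ℝ≥0∞) (hf : ∀ i, Measurable (f i)) :
    ∫⁻ x : Fin n → ℝ, ∏ i, f i (x i) = ∏ i, ∫⁻ x, f i x := by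
  induction n with
  | zero => simp [volume_pi]
  | succ n ih =>
    rw [volume_pi, ← ((measurePreserving_piFinSuccAbove (fun _ : Fin (n+1) => (volume : Measure ℝ))
      0).symm).lintegral_comp_emb (MeasurableEquiv.measurableEmbedding _)]
    have hm : Measurable fun xs : Fin n → ℝ => ∏ i, f i.succ (xs i) :=
      Finset.measurable_prod _ fun i _ => (hf _).comp (measurable_pi_apply i)
    simp_rw [MeasurableEquiv.piFinSuccAbove_symm_apply, Fin.insertNthEquiv, Equiv.coe_fn_mk,
      Fin.insertNth_zero, Fin.prod_univ_succ, Fin.cons_zero, Fin.cons_succ]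
    simp only [Fin.zero_succAbove, cast_eq]
    rw [lintegral_prod_mul (hf 0).aemeasurable hm.aemeasurable]
    rw [show (Measure.pi fun _ : Fin n => (volume : Measure ℝ)) = volume from (volume_pi).symm,
      ih _ fun i => hf i.succ, ← Fin.prod_univ_succ (fun i => ∫⁻ (x : ℝ), f i x)]

/-- Step C: a uniform bound on `∫⁻ b in Ioc 0 t, |a-b|^r` for `-1 < r ≤ 0`. -/
lemma stepC {r : ℝ} (hr : -1 < r) {t a : ℝ} (ht : 0 < t) (ha : a ∈ Set.Ioc (0:ℝ) t) :
    ∫⁻ b in Set.Ioc (0:ℝ) t, ENNReal.ofReal (|a - b| ^ r)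
      ≤ ENNReal.ofReal (2 * (t ^ (r+1) / (r+1))) := by
  have hr1 : 0 < r + 1 := by linarith
  have hX : (0:ℝ) ≤ t ^ (r+1) / (r+1) :=
    div_nonneg (Real.rpow_nonneg ht.le _) hr1.le
  have hbound : ENNReal.ofReal (a ^ (r+1) / (r+1)) ≤ ENNReal.ofReal (t ^ (r+1) / (r+1)) := by
    apply ENNReal.ofReal_le_ofReal
    gcongr
    exacts [ha.1.le, ha.2]
  have hsplit : Set.Ioc (0:ℝ) t = Set.Ioc 0 a ∪ Set.Ioc a t :=
    (Set.Ioc_union_Ioc_eq_Ioc ha.1.le ha.2).symm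
  have piece1 : ∫⁻ b in Set.Ioc (0:ℝ) a, ENNReal.ofReal (|a - b| ^ r)
      ≤ ENNReal.ofReal (t ^ (r+1) / (r+1)) := by
    have hcongr : ∫⁻ b in Set.Ioc (0:ℝ) a, ENNReal.ofReal (|a - b| ^ r)
        = ∫⁻ b in Set.Ioc (0:ℝ) a, ENNReal.ofReal ((a - b) ^ r) := by
      refine setLIntegral_congr_fun measurableSet_Ioc ?_
      intro b hb
      dsimp only
      rw [abs_of_nonneg (by linarith [hb.2] : (0:ℝ) ≤ a - b)]
    have hpre : (fun x : ℝ => a - x) ⁻¹' (Set.Ico 0 a) = Set.Ioc 0 a := by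
      ext x
      simp only [Set.mem_preimage, Set.mem_Ico, Set.mem_Ioc]
      constructor <;> intro h <;> constructor <;> linarith [h.1, h.2]
    have hsub := (Measure.measurePreserving_sub_left (volume : Measure ℝ) a)
      |>.setLIntegral_comp_preimage_emb ((MeasurableEquiv.subLeft a).measurableEmbedding)
        (fun w => ENNReal.ofReal (w ^ r)) (Set.Ico 0 a)
    rw [hpre] at hsub
    rw [hcongr, hsub, setLIntegral_congr Ico_ae_eq_Ioc, lint_Ioc_rpow hr ha.1.le]
    exact hbound
  have piece2 : ∫⁻ b in Set.Ioc a t, ENNReal.ofReal (|a - b| ^ r)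
      ≤ ENNReal.ofReal (t ^ (r+1) / (r+1)) := by
    have hcongr : ∫⁻ b in Set.Ioc a t, ENNReal.ofReal (|a - b| ^ r)
        = ∫⁻ b in Set.Ioc a t, ENNReal.ofReal ((b - a) ^ r) := by
      refine setLIntegral_congr_fun measurableSet_Ioc ?_
      intro b hb
      dsimp only
      rw [abs_of_nonpos (by linarith [hb.1] : a - b ≤ 0), neg_sub]
    have hpre : (fun x : ℝ => x - a) ⁻¹' (Set.Ioc 0 (t - a)) = Set.Ioc a t := by
      ext x
      simp only [Set.mem_preimage, Set.mem_Ioc]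
      constructor <;> intro h <;> constructor <;> linarith [h.1, h.2]
    have hsub := (measurePreserving_sub_right (volume : Measure ℝ) a)
      |>.setLIntegral_comp_preimage_emb ((MeasurableEquiv.subRight a).measurableEmbedding)
        (fun w => ENNReal.ofReal (w ^ r)) (Set.Ioc 0 (t - a))
    rw [hpre] at hsub
    rw [hcongr, hsub]
    calc ∫⁻ w in Set.Ioc (0:ℝ) (t - a), ENNReal.ofReal (w ^ r)
        ≤ ∫⁻ w in Set.Ioc (0:ℝ) t, ENNReal.ofReal (w ^ r) :=
          lintegral_mono_set (Set.Ioc_subset_Ioc_right (by linarith [ha.1]))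
      _ = ENNReal.ofReal (t ^ (r+1) / (r+1)) := lint_Ioc_rpow hr ht.le
  calc ∫⁻ b in Set.Ioc (0:ℝ) t, ENNReal.ofReal (|a - b| ^ r)
      ≤ (∫⁻ b in Set.Ioc (0:ℝ) a, ENNReal.ofReal (|a - b| ^ r))
        + ∫⁻ b in Set.Ioc a t, ENNReal.ofReal (|a - b| ^ r) := by
        rw [hsplit]; exact lintegral_union_le _ _ _
    _ ≤ ENNReal.ofReal (t ^ (r+1) / (r+1)) + ENNReal.ofReal (t ^ (r+1) / (r+1)) :=
        add_le_add piece1 piece2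
    _ = ENNReal.ofReal (2 * (t ^ (r+1) / (r+1))) := by
        rw [← ENNReal.ofReal_add hX hX]; ring_nf

lemma arith1 (c q1 q2 : ℝ) :
    c / q1 + -c / q2 = (1/q1 + 1/(-q2)) * c := by
  rw [one_div, one_div, inv_neg]; ring

/-- Step B: bound on the correlation kernel `∫⁻ x, F(a-x) F(b-x)`. -/
lemma stepB (k : ℕ) (hk : 1 ≤ k) (H l : ℝ) (hH : 1/2 < H) (hH' : H ≠ 1) (hl : 0 < l) :
    ∃ D : ℝ, 0 < D ∧ ∀ a b : ℝ, a ≠ b →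
      (∫⁻ x : ℝ, ENNReal.ofReal (tk (-(1/2 + (1 - H)/(k:ℝ))) l (a - x))
          * ENNReal.ofReal (tk (-(1/2 + (1 - H)/(k:ℝ))) l (b - x)))
        ≤ ENNReal.ofReal (D * |a - b| ^ ((min (2*H) 2 - 2)/(k:ℝ))) := by
  have hk0 : (0:ℝ) < (k:ℝ) := by exact_mod_cast hk
  set p : ℝ := -(1/2 + (1 - H)/(k:ℝ)) with hp_def
  set F : ℝ → ℝ≥0∞ := fun v => ENNReal.ofReal (tk p l v) with hF_def
  have mF : Measurable F := ENNReal.measurable_ofReal.comp (tk_meas p l)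
  have hm2 : ∀ a b : ℝ, Measurable fun x : ℝ => F (a - x) * F (b - x) := fun a b =>
    (mF.comp (measurable_const.sub measurable_id)).mul
      (mF.comp (measurable_const.sub measurable_id))
  rcases lt_or_gt_of_ne hH' with hH1 | hH1
  · -- case H < 1
    have hmin : min (2*H) 2 = 2*H := min_eq_left (by linarith)
    have hq : (min (2*H) 2 - 2)/(k:ℝ) = 2*p + 1 := by
      rw [hmin, hp_def]; field_simp; ring
    have h1Hk : (1 - H)/(k:ℝ) ≤ 1 - H := by
      apply div_le_self (by linarith)
      exact_mod_cast hk
    have h1Hk0 : 0 < (1 - H)/(k:ℝ) := div_pos (by linarith) hk0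
    have hp1 : -1 < p := by rw [hp_def]; linarith
    have hple : p ≤ 0 := by rw [hp_def]; linarith
    have hp2 : 2*p + 1 < 0 := by rw [hp_def]; nlinarith
    have hpp1 : 0 < p + 1 := by linarith
    set D : ℝ := 1/(p+1) + 1/(-(2*p+1)) with hD_def
    have hD : 0 < D := by
      apply add_pos (by positivity)
      rw [one_div]; exact inv_pos.mpr (by linarith)
    have key : ∀ a b : ℝ, b < a →
        (∫⁻ x : ℝ, F (a - x) * F (b - x)) ≤ ENNReal.ofReal (D * (a - b) ^ (2*p+1)) := by
      intro a b hba
      set u : ℝ := a - b with hu_def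
      have hu : 0 < u := by rw [hu_def]; linarith
      have hptwise : ∀ x : ℝ, F (a - x) * F (b - x)
          ≤ (Set.Iio b).indicator (fun x => ENNReal.ofReal ((a - x) ^ p * (b - x) ^ p)) x := by
        intro x
        by_cases hx : x < b
        · rw [Set.indicator_of_mem (show x ∈ Set.Iio b from hx)]
          have hax : 0 < a - x := by linarith
          have hbx : 0 < b - x := by linarith
          have h1 : tk p l (a - x) ≤ (a - x) ^ p := by
            unfold tk; rw [if_pos hax]
            exact mul_le_of_le_one_right (Real.rpow_nonneg hax.le _)
              (Real.exp_le_one_iff.mpr (neg_nonpos.mpr (mul_nonneg hl.le hax.le)))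
          have h2 : tk p l (b - x) ≤ (b - x) ^ p := by
            unfold tk; rw [if_pos hbx]
            exact mul_le_of_le_one_right (Real.rpow_nonneg hbx.le _)
              (Real.exp_le_one_iff.mpr (neg_nonpos.mpr (mul_nonneg hl.le hbx.le)))
          calc F (a-x) * F (b-x)
              ≤ ENNReal.ofReal ((a-x)^p) * ENNReal.ofReal ((b-x)^p) :=
                mul_le_mul' (ENNReal.ofReal_le_ofReal h1) (ENNReal.ofReal_le_ofReal h2)
            _ = ENNReal.ofReal ((a-x)^p * (b-x)^p) :=
                (ENNReal.ofReal_mul (Real.rpow_nonneg hax.le _)).symm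
        · rw [Set.indicator_of_notMem (show x ∉ Set.Iio b from hx)]
          have hz : tk p l (b - x) = 0 := by
            unfold tk; rw [if_neg]; push_neg at hx; linarith
          simp [hF_def, hz]
      have hpiece1 : (∫⁻ w in Set.Ioc (0:ℝ) u, ENNReal.ofReal ((u + w) ^ p * w ^ p))
          ≤ ENNReal.ofReal (u ^ (2*p+1) / (p+1)) := by
        have hmono : (∫⁻ w in Set.Ioc (0:ℝ) u, ENNReal.ofReal ((u + w) ^ p * w ^ p))
            ≤ ∫⁻ w in Set.Ioc (0:ℝ) u, ENNReal.ofReal (u ^ p) * ENNReal.ofReal (w ^ p) := by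
          apply lintegral_mono_ae
          filter_upwards [ae_restrict_mem measurableSet_Ioc] with w hw
          rw [← ENNReal.ofReal_mul (Real.rpow_nonneg hu.le _)]
          apply ENNReal.ofReal_le_ofReal
          exact mul_le_mul_of_nonneg_right
            (Real.rpow_le_rpow_of_nonpos hu (by linarith [hw.1]) hple)
            (Real.rpow_nonneg hw.1.le _)
        rw [lintegral_const_mul' _ _ ENNReal.ofReal_ne_top, lint_Ioc_rpow hp1 hu.le] at hmono
        refine hmono.trans (le_of_eq ?_)
        rw [← ENNReal.ofReal_mul (Real.rpow_nonneg hu.le _)]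
        congr 1
        rw [← mul_div_assoc, ← Real.rpow_add hu]
        ring_nf
      have hpiece2 : (∫⁻ w in Set.Ioi u, ENNReal.ofReal ((u + w) ^ p * w ^ p))
          ≤ ENNReal.ofReal (-u ^ (2*p+1) / (2*p+1)) := by
        have hmono : (∫⁻ w in Set.Ioi u, ENNReal.ofReal ((u + w) ^ p * w ^ p))
            ≤ ∫⁻ w in Set.Ioi u, ENNReal.ofReal (w ^ (2*p)) := by
          apply lintegral_mono_ae
          filter_upwards [ae_restrict_mem measurableSet_Ioi] with w hw
          have hw0 : 0 < w := hu.trans hw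
          apply ENNReal.ofReal_le_ofReal
          calc (u+w)^p * w^p ≤ w^p * w^p :=
              mul_le_mul_of_nonneg_right
                (Real.rpow_le_rpow_of_nonpos hw0 (by linarith) hple)
                (Real.rpow_nonneg hw0.le _)
            _ = w^(2*p) := by rw [← Real.rpow_add hw0]; ring_nf
        exact hmono.trans (le_of_eq (lint_Ioi_rpow (by linarith) hu))
      calc (∫⁻ x : ℝ, F (a - x) * F (b - x))
          ≤ ∫⁻ x, (Set.Iio b).indicator
              (fun x => ENNReal.ofReal ((a - x) ^ p * (b - x) ^ p)) x :=
            lintegral_mono hptwise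
        _ = ∫⁻ x in Set.Iio b, ENNReal.ofReal ((a - x) ^ p * (b - x) ^ p) :=
            lintegral_indicator measurableSet_Iio _
        _ = ∫⁻ w in Set.Ioi (0:ℝ), ENNReal.ofReal ((u + w) ^ p * w ^ p) := by
            have hpre : (fun x : ℝ => b - x) ⁻¹' (Set.Ioi 0) = Set.Iio b := by
              ext x; simp [sub_pos]
            have hsub := (Measure.measurePreserving_sub_left (volume : Measure ℝ) b)
              |>.setLIntegral_comp_preimage_emb
                ((MeasurableEquiv.subLeft b).measurableEmbedding)
                (fun w => ENNReal.ofReal ((u + w) ^ p * w ^ p)) (Set.Ioi 0)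
            rw [hpre] at hsub
            rw [← hsub]
            refine setLIntegral_congr_fun measurableSet_Iio ?_
            intro x hx
            dsimp only
            rw [show u + (b - x) = a - x by rw [hu_def]; ring]
        _ ≤ (∫⁻ w in Set.Ioc (0:ℝ) u, ENNReal.ofReal ((u + w) ^ p * w ^ p))
            + ∫⁻ w in Set.Ioi u, ENNReal.ofReal ((u + w) ^ p * w ^ p) := by
            rw [← Set.Ioc_union_Ioi_eq_Ioi hu.le]
            exact lintegral_union_le _ _ _
        _ ≤ ENNReal.ofReal (u ^ (2*p+1) / (p+1)) + ENNReal.ofReal (-u ^ (2*p+1) / (2*p+1)) :=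
            add_le_add hpiece1 hpiece2
        _ = ENNReal.ofReal (D * u ^ (2*p+1)) := by
            rw [← ENNReal.ofReal_add
              (div_nonneg (Real.rpow_nonneg hu.le _) hpp1.le)
              (div_nonneg_of_nonpos (neg_nonpos.mpr (Real.rpow_nonneg hu.le _)) (by linarith))]
            congr 1
            exact arith1 _ _ _
    have Krepr : ∀ a b : ℝ, (∫⁻ x : ℝ, F (a - x) * F (b - x))
        = ∫⁻ x : ℝ, F (x - b) * F (x - a) := by
      intro a b
      have h := (Measure.measurePreserving_sub_left (volume : Measure ℝ) (a+b)).lintegral_comp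
        (f := fun x => F (a - x) * F (b - x)) (hm2 a b)
      calc (∫⁻ x : ℝ, F (a - x) * F (b - x))
          = ∫⁻ x : ℝ, F (a - ((a+b) - x)) * F (b - ((a+b) - x)) := h.symm
        _ = ∫⁻ x : ℝ, F (x - b) * F (x - a) := by
            refine lintegral_congr fun x => ?_
            rw [show a - ((a+b) - x) = x - b by ring, show b - ((a+b) - x) = x - a by ring]
    refine ⟨D, hD, fun a b hab => ?_⟩
    rw [hq]
    rcases lt_or_gt_of_ne hab with h | h
    · have hKsym : (∫⁻ x : ℝ, F (a - x) * F (b - x)) = ∫⁻ x : ℝ, F (b - x) * F (a - x) := by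
        rw [Krepr a b, Krepr b a]
        exact lintegral_congr fun x => mul_comm _ _
      rw [hKsym, abs_of_neg (by linarith : a - b < 0), neg_sub]
      exact key b a h
    · rw [abs_of_pos (by linarith : 0 < a - b)]
      exact key a b h
  · -- case H > 1
    have hmin : min (2*H) 2 = 2 := min_eq_right (by linarith)
    have hq : (min (2*H) 2 - 2)/(k:ℝ) = 0 := by rw [hmin]; simp
    have hp3 : -1 < 2*p := by
      rw [hp_def]
      have : (1 - H)/(k:ℝ) < 0 := div_neg_of_neg_of_pos (by linarith) hk0
      linarith
    have hg : IntegrableOn (fun v : ℝ => v ^ (2*p) * Real.exp (-(2*l) * v)) (Set.Ioi 0) := by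
      have h := integrableOn_rpow_mul_exp_neg_mul_rpow (p := 1) (s := 2*p) (b := 2*l)
        hp3 one_pos (by linarith)
      simpa [Real.rpow_one] using h
    set C0 : ℝ := ∫ v in Set.Ioi (0:ℝ), v ^ (2*p) * Real.exp (-(2*l) * v) with hC0_def
    have hC0 : 0 ≤ C0 := by
      apply setIntegral_nonneg measurableSet_Ioi
      intro v hv
      exact mul_nonneg (Real.rpow_nonneg (le_of_lt hv) _) (Real.exp_nonneg _)
    have hId : (∫⁻ v in Set.Ioi (0:ℝ), ENNReal.ofReal (v ^ (2*p) * Real.exp (-(2*l) * v)))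
        = ENNReal.ofReal C0 := by
      rw [← ofReal_integral_eq_lintegral_ofReal hg ?_]
      filter_upwards [ae_restrict_mem measurableSet_Ioi] with v hv
      exact mul_nonneg (Real.rpow_nonneg (le_of_lt hv) _) (Real.exp_nonneg _)
    have hsq : ∀ c : ℝ, (∫⁻ x : ℝ, (F (c - x))^2) = ENNReal.ofReal C0 := by
      intro c
      have hmp := (Measure.measurePreserving_sub_left (volume : Measure ℝ) c).lintegral_comp
        (f := fun v => (F v)^2) (mF.pow_const 2)
      rw [hmp]
      have hpt : ∀ v : ℝ, (F v)^2 = (Set.Ioi (0:ℝ)).indicator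
          (fun v => ENNReal.ofReal (v ^ (2*p) * Real.exp (-(2*l) * v))) v := by
        intro v
        by_cases hv : 0 < v
        · rw [Set.indicator_of_mem (show v ∈ Set.Ioi (0:ℝ) from hv), hF_def]
          rw [← ENNReal.ofReal_pow (tk_nonneg p l v)]
          congr 1
          unfold tk
          rw [if_pos hv, mul_pow]
          congr 1
          · rw [← Real.rpow_natCast (v ^ p) 2, ← Real.rpow_mul hv.le]
            norm_num
            ring_nf
          · rw [← Real.exp_nat_mul]
            congr 1
            push_cast
            ring
        · rw [Set.indicator_of_notMem (show v ∉ Set.Ioi (0:ℝ) from hv), hF_def]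
          simp [tk, hv]
      simp_rw [hpt]
      rw [lintegral_indicator measurableSet_Ioi, hId]
    refine ⟨2*C0 + 1, by linarith, fun a b _ => ?_⟩
    have amgm : ∀ m n : ℝ≥0∞, m * n ≤ m^2 + n^2 := by
      intro m n
      rcases le_total m n with h | h
      · calc m * n ≤ n * n := mul_le_mul_left h n
          _ = n^2 := (sq n).symm
          _ ≤ m^2 + n^2 := le_add_self
      · calc m * n ≤ m * m := mul_le_mul_right h m
          _ = m^2 := (sq m).symm
          _ ≤ m^2 + n^2 := le_self_add
    calc (∫⁻ x : ℝ, F (a - x) * F (b - x))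
        ≤ ∫⁻ x : ℝ, (F (a - x))^2 + (F (b - x))^2 := lintegral_mono fun x => amgm _ _
      _ = (∫⁻ x : ℝ, (F (a - x))^2) + ∫⁻ x : ℝ, (F (b - x))^2 :=
          lintegral_add_left ((mF.comp (measurable_const.sub measurable_id)).pow_const 2) _
      _ = ENNReal.ofReal C0 + ENNReal.ofReal C0 := by rw [hsq, hsq]
      _ ≤ ENNReal.ofReal ((2*C0 + 1) * |a - b| ^ ((min (2*H) 2 - 2)/(k:ℝ))) := by
          rw [hq, Real.rpow_zero, mul_one, ← ENNReal.ofReal_add hC0 hC0]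
          apply ENNReal.ofReal_le_ofReal
          linarith

/-- Step A + assembly: the one-parameter moment bound, for an abstract kernel `F`. -/
lemma stepA_bound (k : ℕ) (hk : 1 ≤ k) (F : ℝ → ℝ≥0∞) (mF : Measurable F)
    (hFne : ∀ v, F v ≠ ∞)
    (D r : ℝ) (hD : 0 < D) (hr1 : -1 < r) (hr0 : r ≤ 0)
    (hKb : ∀ a b : ℝ, a ≠ b → (∫⁻ x : ℝ, F (a - x) * F (b - x))
        ≤ ENNReal.ofReal (D * |a - b| ^ (r/(k:ℝ))))
    {t : ℝ} (ht : 0 < t) :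
    ∫⁻ x : Fin k → ℝ, (∫⁻ a in Set.Ioc (0:ℝ) t, ∏ j, F (a - x j)) ^ 2
      ≤ ENNReal.ofReal (D ^ k * (2 / (r+1)) * t ^ (r + 2)) := by
  have hk0 : (0:ℝ) < (k:ℝ) := by exact_mod_cast hk
  have hr2 : 0 < r + 1 := by linarith
  set I := Set.Ioc (0:ℝ) t with hI_def
  set G : ℝ → (Fin k → ℝ) → ℝ≥0∞ := fun a x => ∏ j, F (a - x j) with hG_def
  set K : ℝ → ℝ → ℝ≥0∞ := fun a b => ∫⁻ x : ℝ, F (a - x) * F (b - x) with hK_def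
  have mG : Measurable fun q : ℝ × (Fin k → ℝ) => G q.1 q.2 :=
    Finset.measurable_prod _ fun j _ =>
      mF.comp (measurable_fst.sub ((measurable_pi_apply j).comp measurable_snd))
  have mGa : ∀ a, Measurable (G a) := fun a =>
    mG.comp (measurable_const.prodMk measurable_id)
  have mGx : ∀ x, Measurable fun a => G a x := fun x =>
    mG.comp (measurable_id.prodMk measurable_const)
  have hGne : ∀ a x, G a x ≠ ∞ := fun a x =>
    (ENNReal.prod_lt_top fun j _ => (hFne _).lt_top).ne
  have hm2 : ∀ a b : ℝ, Measurable fun x : ℝ => F (a - x) * F (b - x) := fun a b =>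
    (mF.comp (measurable_const.sub measurable_id)).mul
      (mF.comp (measurable_const.sub measurable_id))
  have mW : Measurable fun x : Fin k → ℝ => ∫⁻ a in I, G a x :=
    Measurable.lintegral_prod_right' (f := fun q : (Fin k → ℝ) × ℝ => G q.2 q.1)
      (mG.comp measurable_swap)
  have stepA : ∫⁻ x : Fin k → ℝ, (∫⁻ a in I, G a x) ^ 2
      = ∫⁻ a in I, ∫⁻ b in I, (K a b) ^ k := by
    have h1 : ∫⁻ x : Fin k → ℝ, (∫⁻ a in I, G a x) ^ 2
        = ∫⁻ x : Fin k → ℝ, ∫⁻ a in I, G a x * (∫⁻ b in I, G b x) := by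
      refine lintegral_congr fun x => ?_
      rw [pow_two, ← lintegral_mul_const _ (mGx x)]
    have hswap1 := lintegral_lintegral_swap
      (μ := (volume : Measure (Fin k → ℝ))) (ν := volume.restrict I)
      (f := fun x a => G a x * (∫⁻ b in I, G b x))
      (((mG.comp measurable_swap).mul (mW.comp measurable_fst)).aemeasurable)
    rw [h1, hswap1]
    refine lintegral_congr fun a => ?_
    have h2 : ∫⁻ x : Fin k → ℝ, G a x * (∫⁻ b in I, G b x)
        = ∫⁻ x : Fin k → ℝ, ∫⁻ b in I, G a x * G b x :=
      lintegral_congr fun x => (lintegral_const_mul' _ _ (hGne a x)).symm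
    have hswap2 := lintegral_lintegral_swap
      (μ := (volume : Measure (Fin k → ℝ))) (ν := volume.restrict I)
      (f := fun x b => G a x * G b x)
      ((((mGa a).comp measurable_fst).mul (mG.comp measurable_swap)).aemeasurable)
    rw [h2, hswap2]
    refine lintegral_congr fun b => ?_
    calc ∫⁻ x : Fin k → ℝ, G a x * G b x
        = ∫⁻ x : Fin k → ℝ, ∏ j : Fin k, (fun v => F (a - v) * F (b - v)) (x j) := by
          refine lintegral_congr fun x => ?_
          rw [hG_def]
          exact Finset.prod_mul_distrib.symm
      _ = ∏ _j : Fin k, ∫⁻ v : ℝ, F (a - v) * F (b - v) :=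
          my_lintegral_fin_prod _ (fun j => hm2 a b)
      _ = (K a b) ^ k := by rw [Finset.prod_const, Finset.card_univ, Fintype.card_fin]
  rw [stepA]
  have hae_ne : ∀ a : ℝ, ∀ᵐ b ∂(volume.restrict I), b ≠ a := by
    intro a
    have h2 : (volume.restrict I) {a} = 0 := by
      rw [Measure.restrict_apply (measurableSet_singleton a)]
      exact measure_mono_null Set.inter_subset_left Real.volume_singleton
    exact ae_iff.mpr (measure_mono_null
      (fun b hb => show b ∈ ({a} : Set ℝ) from by simpa using not_not.mp hb) h2)
  have hinner : ∀ a ∈ I, (∫⁻ b in I, (K a b) ^ k)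
      ≤ ENNReal.ofReal (D ^ k) * ENNReal.ofReal (2 * (t ^ (r+1) / (r+1))) := by
    intro a ha
    have step1 : (∫⁻ b in I, (K a b) ^ k)
        ≤ ∫⁻ b in I, ENNReal.ofReal (D ^ k) * ENNReal.ofReal (|a - b| ^ r) := by
      apply lintegral_mono_ae
      filter_upwards [hae_ne a] with b hb
      have hKpow : (K a b) ^ k ≤ (ENNReal.ofReal (D * |a - b| ^ (r/(k:ℝ)))) ^ k :=
        pow_le_pow_left' (hKb a b hb.symm) k
      refine hKpow.trans (le_of_eq ?_)
      rw [← ENNReal.ofReal_pow (mul_nonneg hD.le (Real.rpow_nonneg (abs_nonneg _) _))]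
      rw [mul_pow, ← Real.rpow_natCast (|a - b| ^ (r/(k:ℝ))) k,
        ← Real.rpow_mul (abs_nonneg _), div_mul_cancel₀ _ (ne_of_gt hk0)]
      rw [ENNReal.ofReal_mul (pow_nonneg hD.le k)]
    rw [lintegral_const_mul' _ _ ENNReal.ofReal_ne_top] at step1
    exact step1.trans (mul_le_mul_right (stepC hr1 ht ha) _)
  calc ∫⁻ a in I, ∫⁻ b in I, (K a b) ^ k
      ≤ ∫⁻ _a in I, ENNReal.ofReal (D ^ k) * ENNReal.ofReal (2 * (t ^ (r+1) / (r+1))) := by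
        apply lintegral_mono_ae
        filter_upwards [ae_restrict_mem measurableSet_Ioc] with a ha
        exact hinner a ha
    _ = ENNReal.ofReal (D ^ k) * ENNReal.ofReal (2 * (t ^ (r+1) / (r+1))) * volume I := by
        rw [setLIntegral_const]
    _ = ENNReal.ofReal (D ^ k) * ENNReal.ofReal (2 * (t ^ (r+1) / (r+1))) * ENNReal.ofReal t := by
        rw [hI_def, Real.volume_Ioc, sub_zero]
    _ ≤ ENNReal.ofReal (D ^ k * (2 / (r+1)) * t ^ (r + 2)) := by
        rw [← ENNReal.ofReal_mul (pow_nonneg hD.le k), ← ENNReal.ofReal_mul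
          (mul_nonneg (pow_nonneg hD.le k)
            (mul_nonneg (by norm_num) (div_nonneg (Real.rpow_nonneg ht.le _) hr2.le)))]
        apply ENNReal.ofReal_le_ofReal
        have hexp : t ^ (r+1) * t = t ^ (r+2) := by
          rw [← Real.rpow_add_one (ne_of_gt ht)]
          congr 1
          ring
        calc D ^ k * (2 * (t ^ (r+1) / (r+1))) * t
            = D ^ k * (2 / (r+1)) * (t ^ (r+1) * t) := by ring
          _ = D ^ k * (2 / (r+1)) * t ^ (r+2) := by rw [hexp]
          _ ≤ D ^ k * (2 / (r+1)) * t ^ (r+2) := le_refl _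

/-- The one-parameter moment bound for the tempered kernel. -/
lemma oneParam (k : ℕ) (hk : 1 ≤ k) (H l : ℝ) (hH : 1/2 < H) (hH' : H ≠ 1) (hl : 0 < l) :
    ∃ C : ℝ, 0 < C ∧ ∀ t : ℝ, 0 < t →
      ∫⁻ x : Fin k → ℝ,
          (∫⁻ a in Set.Ioc (0:ℝ) t,
            ∏ j, ENNReal.ofReal (tk (-(1/2 + (1 - H)/(k:ℝ))) l (a - x j))) ^ 2
        ≤ ENNReal.ofReal (C * t ^ min (2*H) 2) := by
  have hk0 : (0:ℝ) < (k:ℝ) := by exact_mod_cast hk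
  obtain ⟨D, hD, hKb⟩ := stepB k hk H l hH hH' hl
  set r : ℝ := min (2*H) 2 - 2 with hr_def
  have hr1 : -1 < r := by
    rcases le_total (2*H) 2 with h | h
    · rw [hr_def, min_eq_left h]; linarith
    · rw [hr_def, min_eq_right h]; linarith
  have hr0 : r ≤ 0 := by
    rw [hr_def]
    have := min_le_right (2*H) 2
    linarith
  refine ⟨D ^ k * (2 / (r+1)),
    mul_pos (pow_pos hD k) (div_pos two_pos (by linarith)), fun t ht => ?_⟩
  have hb := stepA_bound k hk (fun v => ENNReal.ofReal (tk (-(1/2 + (1 - H)/(k:ℝ))) l v))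
    (ENNReal.measurable_ofReal.comp (tk_meas _ l)) (fun v => ENNReal.ofReal_ne_top)
    D r hD hr1 hr0 (fun a b hab => hKb a b hab) ht
  refine hb.trans (le_of_eq ?_)
  congr 2
  rw [hr_def]
  ring

end Auxiliary

/-- for `k ≥ 1`, `λ₁, λ₂ > 0` and `H₁, H₂ > 1/2` with `H₁ ≠ 1 ≠ H₂`,
there is a constant `C > 0` such that for all `s, t > 0`,
`∫_{(ℝ²)^k} h_{s,t}² ≤ C · t^{min(2H₁,2)} · s^{min(2H₂,2)}`. -/
theorem kernel_sq_integral_bound (k : ℕ) (hk : 1 ≤ k) (H1 H2 l1 l2 : ℝ)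
    (hH1 : 1/2 < H1) (hH2 : 1/2 < H2) (hH1' : H1 ≠ 1) (hH2' : H2 ≠ 1)
    (hl1 : 0 < l1) (hl2 : 0 < l2) :
    ∃ C : ℝ, 0 < C ∧ ∀ t s : ℝ, 0 < t → 0 < s →
      ∫⁻ p : (Fin k → ℝ) × (Fin k → ℝ),
          ENNReal.ofReal ((hkernel k H1 H2 l1 l2 t s p.1 p.2) ^ 2)
        ≤ ENNReal.ofReal (C * t ^ (min (2 * H1) 2) * s ^ (min (2 * H2) 2)) := by
  obtain ⟨C1, hC1, hB1⟩ := oneParam k hk H1 l1 hH1 hH1' hl1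
  obtain ⟨C2, hC2, hB2⟩ := oneParam k hk H2 l2 hH2 hH2' hl2
  refine ⟨C1 * C2, mul_pos hC1 hC2, fun t s ht hs => ?_⟩
  set p1 : ℝ := -(1/2 + (1 - H1)/(k:ℝ)) with hp1_def
  set p2 : ℝ := -(1/2 + (1 - H2)/(k:ℝ)) with hp2_def
  have hfact : ∀ x y : Fin k → ℝ, hkernel k H1 H2 l1 l2 t s x y =
      (∫ a in Set.Ioc (0:ℝ) t, ∏ j, tk p1 l1 (a - x j))
        * ∫ b in Set.Ioc (0:ℝ) s, ∏ j, tk p2 l2 (b - y j) := by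
    intro x y
    unfold hkernel
    simp_rw [Finset.prod_mul_distrib, integral_const_mul, integral_mul_const]
    rfl
  have hnn : ∀ (p l c : ℝ) (x : Fin k → ℝ),
      0 ≤ ∫ a in Set.Ioc (0:ℝ) c, ∏ j, tk p l (a - x j) :=
    fun p l c x => integral_nonneg fun a => Finset.prod_nonneg fun j _ => tk_nonneg _ _ _
  have key1 : ∀ (p l c : ℝ) (x : Fin k → ℝ),
      ENNReal.ofReal (∫ a in Set.Ioc (0:ℝ) c, ∏ j, tk p l (a - x j))
        ≤ ∫⁻ a in Set.Ioc (0:ℝ) c, ∏ j, ENNReal.ofReal (tk p l (a - x j)) := by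
    intro p l c x
    by_cases hint : IntegrableOn (fun a => ∏ j, tk p l (a - x j)) (Set.Ioc 0 c)
    · rw [ofReal_integral_eq_lintegral_ofReal hint
        (Filter.Eventually.of_forall fun a => Finset.prod_nonneg fun j _ => tk_nonneg _ _ _)]
      refine le_of_eq (lintegral_congr fun a => ?_)
      exact ENNReal.ofReal_prod_of_nonneg fun j _ => tk_nonneg _ _ _
    · rw [integral_undef hint]
      simp
  have mL1 : Measurable fun x : Fin k → ℝ =>
      ∫⁻ a in Set.Ioc (0:ℝ) t, ∏ j, ENNReal.ofReal (tk p1 l1 (a - x j)) :=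
    Measurable.lintegral_prod_right'
      (f := fun q : (Fin k → ℝ) × ℝ => ∏ j, ENNReal.ofReal (tk p1 l1 (q.2 - q.1 j)))
      (Finset.measurable_prod _ fun j _ => ENNReal.measurable_ofReal.comp
        ((tk_meas p1 l1).comp (measurable_snd.sub ((measurable_pi_apply j).comp measurable_fst))))
  have mL2 : Measurable fun y : Fin k → ℝ =>
      ∫⁻ b in Set.Ioc (0:ℝ) s, ∏ j, ENNReal.ofReal (tk p2 l2 (b - y j)) :=
    Measurable.lintegral_prod_right'
      (f := fun q : (Fin k → ℝ) × ℝ => ∏ j, ENNReal.ofReal (tk p2 l2 (q.2 - q.1 j)))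
      (Finset.measurable_prod _ fun j _ => ENNReal.measurable_ofReal.comp
        ((tk_meas p2 l2).comp (measurable_snd.sub ((measurable_pi_apply j).comp measurable_fst))))
  calc ∫⁻ pq : (Fin k → ℝ) × (Fin k → ℝ),
        ENNReal.ofReal ((hkernel k H1 H2 l1 l2 t s pq.1 pq.2) ^ 2)
      ≤ ∫⁻ pq : (Fin k → ℝ) × (Fin k → ℝ),
          (∫⁻ a in Set.Ioc (0:ℝ) t, ∏ j, ENNReal.ofReal (tk p1 l1 (a - pq.1 j))) ^ 2
          * (∫⁻ b in Set.Ioc (0:ℝ) s, ∏ j, ENNReal.ofReal (tk p2 l2 (b - pq.2 j))) ^ 2 := by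
        apply lintegral_mono
        intro pq
        dsimp only
        rw [hfact pq.1 pq.2, mul_pow, ENNReal.ofReal_mul (sq_nonneg _),
          ENNReal.ofReal_pow (hnn p1 l1 t pq.1), ENNReal.ofReal_pow (hnn p2 l2 s pq.2)]
        exact mul_le_mul' (pow_le_pow_left' (key1 p1 l1 t pq.1) 2)
          (pow_le_pow_left' (key1 p2 l2 s pq.2) 2)
    _ = (∫⁻ x : Fin k → ℝ,
          (∫⁻ a in Set.Ioc (0:ℝ) t, ∏ j, ENNReal.ofReal (tk p1 l1 (a - x j))) ^ 2)
        * ∫⁻ y : Fin k → ℝ,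
          (∫⁻ b in Set.Ioc (0:ℝ) s, ∏ j, ENNReal.ofReal (tk p2 l2 (b - y j))) ^ 2 := by
        rw [Measure.volume_eq_prod]
        exact lintegral_prod_mul (mL1.pow_const 2).aemeasurable (mL2.pow_const 2).aemeasurable
    _ ≤ ENNReal.ofReal (C1 * t ^ min (2*H1) 2) * ENNReal.ofReal (C2 * s ^ min (2*H2) 2) :=
        mul_le_mul' (hB1 t ht) (hB2 s hs)
    _ ≤ ENNReal.ofReal (C1 * C2 * t ^ min (2 * H1) 2 * s ^ min (2 * H2) 2) := by
        rw [← ENNReal.ofReal_mul (mul_nonneg hC1.le (Real.rpow_nonneg ht.le _))]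
        exact ENNReal.ofReal_le_ofReal (le_of_eq (by ring))
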